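/- arXiv:2302.11798 — 4 statements merged into one kernel-verified Lean document; each statement's English description precedes it below -/
import Mathlib

section
/- For a bounded linear operator X on a complex Hilbert space H and t ∈ [0,1], the weighted numerical radius of the 2×2 off-diagonal operator matrix [[0, X], [X, 0]] equals w_t(X). -/
open ContinuousLinearMap in
noncomputable def nr {H : Type*} [NormedAddCommGroup H] [InnerProductSpace ℂ H]
    (T : H →L[ℂ] H) : ℝ :=
  ⨆ x : {x : H // ‖x‖ = 1}, ‖(inner ℂ (T x) (x : H) : ℂ)‖

open ContinuousLinearMap in
noncomputable def wnr {H : Type*} [NormedAddCommGroup H] [InnerProductSpace ℂ H]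
    [CompleteSpace H] (t : ℝ) (T : H →L[ℂ] H) : ℝ :=
  nr ((1 - 2*t) • adjoint T + T)

/-- The 2×2 block operator matrix [[A, B], [C, D]] acting on the Hilbert space H ⊕ H. -/
noncomputable def blk {H : Type*} [NormedAddCommGroup H] [InnerProductSpace ℂ H]
    (A B C D : H →L[ℂ] H) : WithLp 2 (H × H) →L[ℂ] WithLp 2 (H × H) :=
  (((WithLp.prodContinuousLinearEquiv 2 ℂ H H).symm :
      (H × H) →L[ℂ] WithLp 2 (H × H)).comp
    (((A.coprod B).prod (C.coprod D)).comp
      ((WithLp.prodContinuousLinearEquiv 2 ℂ H H : WithLp 2 (H × H) ≃L[ℂ] (H × H)) :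
        WithLp 2 (H × H) →L[ℂ] (H × H))))

open ContinuousLinearMap

variable {H : Type*} [NormedAddCommGroup H] [InnerProductSpace ℂ H] [CompleteSpace H]

set_option linter.unusedSectionVars false

lemma blk_fst (A B C D : H →L[ℂ] H) (z : WithLp 2 (H × H)) :
    (blk A B C D z).fst = A z.fst + B z.snd := rfl
lemma blk_snd (A B C D : H →L[ℂ] H) (z : WithLp 2 (H × H)) :
    (blk A B C D z).snd = C z.fst + D z.snd := rfl

lemma blk_lin (c : ℝ) (A B : H →L[ℂ] H) :
    c • blk 0 A A 0 + blk 0 B B 0 = blk 0 (c • A + B) (c • A + B) 0 := by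
  ext z : 1
  refine (WithLp.equiv 2 (H × H)).injective (Prod.ext ?_ ?_) <;>
    simp [blk_fst, blk_snd, WithLp.add_fst, WithLp.add_snd, WithLp.smul_fst, WithLp.smul_snd]

lemma inner_blk (Y : H →L[ℂ] H) (z w : WithLp 2 (H × H)) :
    (inner ℂ (blk 0 Y Y 0 z) w : ℂ) = inner ℂ (Y z.snd) w.fst + inner ℂ (Y z.fst) w.snd := by
  simp [WithLp.prod_inner_apply, blk_fst, blk_snd]

lemma adjoint_blk (X : H →L[ℂ] H) :
    adjoint (blk 0 X X 0) = blk 0 (adjoint X) (adjoint X) 0 := by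
  symm
  rw [eq_adjoint_iff]
  intro z w
  simp only [WithLp.prod_inner_apply, WithLp.ofLp_fst, WithLp.ofLp_snd, blk_fst, blk_snd, zero_apply, zero_add, add_zero,
    adjoint_inner_left]
  ring

lemma nr_bdd (K : Type*) [NormedAddCommGroup K] [InnerProductSpace ℂ K] (T : K →L[ℂ] K) :
    BddAbove (Set.range fun x : {x : K // ‖x‖ = 1} => ‖(inner ℂ (T x) (x : K) : ℂ)‖) := by
  refine ⟨‖T‖, ?_⟩
  rintro r ⟨⟨x, hx⟩, rfl⟩
  calc ‖(inner ℂ (T x) x : ℂ)‖ ≤ ‖T x‖ * ‖x‖ := norm_inner_le_norm _ _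
    _ ≤ ‖T‖ * ‖x‖ * ‖x‖ := by gcongr; exact T.le_opNorm x
    _ = ‖T‖ := by rw [hx]; ring

lemma nr_nonneg {K : Type*} [NormedAddCommGroup K] [InnerProductSpace ℂ K] (T : K →L[ℂ] K) :
    0 ≤ nr T :=
  Real.iSup_nonneg fun _ => norm_nonneg _

lemma inner_le_nr {K : Type*} [NormedAddCommGroup K] [InnerProductSpace ℂ K]
    (T : K →L[ℂ] K) (u : K) : ‖(inner ℂ (T u) u : ℂ)‖ ≤ nr T * ‖u‖ ^ 2 := by
  rcases eq_or_ne u 0 with rfl | hu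
  · simp
  · have hn : (0:ℝ) < ‖u‖ := norm_pos_iff.mpr hu
    set v : K := (‖u‖ : ℂ)⁻¹ • u with hv
    have hv1 : ‖v‖ = 1 := by
      rw [hv, norm_smul]
      simp [hn.ne']
    have key : ‖(inner ℂ (T v) v : ℂ)‖ ≤ nr T :=
      le_ciSup (nr_bdd K T) (⟨v, hv1⟩ : {x : K // ‖x‖ = 1})
    have heq : (inner ℂ (T v) v : ℂ) = ((‖u‖ : ℂ)⁻¹ * (‖u‖ : ℂ)⁻¹) * inner ℂ (T u) u := by
      simp only [hv, map_smul, inner_smul_left, inner_smul_right, map_inv₀,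
        Complex.conj_ofReal]
      ring
    have h3 : ‖(inner ℂ (T v) v : ℂ)‖ = ‖u‖⁻¹ * ‖u‖⁻¹ * ‖(inner ℂ (T u) u : ℂ)‖ := by
      rw [heq]
      simp [norm_mul, norm_inv, abs_of_nonneg hn.le]
    rw [h3] at key
    calc ‖(inner ℂ (T u) u : ℂ)‖
        = (‖u‖⁻¹ * ‖u‖⁻¹ * ‖(inner ℂ (T u) u : ℂ)‖) * ‖u‖ ^ 2 := by
          rw [show (‖u‖⁻¹ * ‖u‖⁻¹ * ‖(inner ℂ (T u) u : ℂ)‖) * ‖u‖ ^ 2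
              = ((‖u‖⁻¹ * ‖u‖⁻¹) * ‖u‖ ^ 2) * ‖(inner ℂ (T u) u : ℂ)‖ from by ring,
            show (‖u‖⁻¹ * ‖u‖⁻¹) * ‖u‖ ^ 2 = 1 from by field_simp [sq], one_mul]
      _ ≤ nr T * ‖u‖ ^ 2 := mul_le_mul_of_nonneg_right key (sq_nonneg _)

lemma nr_blk (Y : H →L[ℂ] H) : nr (blk 0 Y Y 0) = nr Y := by
  apply le_antisymm
  · apply Real.iSup_le _ (nr_nonneg Y)
    rintro ⟨z, hz⟩
    have key : (inner ℂ (blk 0 Y Y 0 z) z : ℂ) =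
        (1/2 : ℂ) * (inner ℂ (Y (z.fst + z.snd)) (z.fst + z.snd)
          - inner ℂ (Y (z.fst - z.snd)) (z.fst - z.snd)) := by
      rw [inner_blk]
      simp only [map_add, map_sub, inner_add_left, inner_add_right, inner_sub_left,
        inner_sub_right]
      ring
    have hsq : ‖z‖ ^ 2 = ‖z.fst‖ ^ 2 + ‖z.snd‖ ^ 2 := WithLp.prod_norm_sq_eq_of_L2 z
    have hnorm2 : ‖z.fst + z.snd‖ ^ 2 + ‖z.fst - z.snd‖ ^ 2 = 2 := by
      nlinarith [parallelogram_law_with_norm ℂ z.fst z.snd, hsq, hz]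
    calc ‖(inner ℂ (blk 0 Y Y 0 z) z : ℂ)‖
        = (1/2) * ‖(inner ℂ (Y (z.fst + z.snd)) (z.fst + z.snd) : ℂ)
            - inner ℂ (Y (z.fst - z.snd)) (z.fst - z.snd)‖ := by
          rw [key, norm_mul]; norm_num
      _ ≤ (1/2) * (‖(inner ℂ (Y (z.fst + z.snd)) (z.fst + z.snd) : ℂ)‖
            + ‖(inner ℂ (Y (z.fst - z.snd)) (z.fst - z.snd) : ℂ)‖) := by
          gcongr; exact norm_sub_le _ _
      _ ≤ (1/2) * (nr Y * ‖z.fst + z.snd‖ ^ 2 + nr Y * ‖z.fst - z.snd‖ ^ 2) := by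
          gcongr <;> exact inner_le_nr Y _
      _ = (1/2) * (nr Y * (‖z.fst + z.snd‖ ^ 2 + ‖z.fst - z.snd‖ ^ 2)) := by ring
      _ = nr Y := by rw [hnorm2]; ring
  · apply Real.iSup_le _ (nr_nonneg _)
    rintro ⟨x, hx⟩
    set r : ℝ := (Real.sqrt 2)⁻¹ with hr
    have hr2 : r * r = 1/2 := by
      rw [hr, ← mul_inv, Real.mul_self_sqrt (by norm_num : (0:ℝ) ≤ 2)]
      norm_num
    set z : WithLp 2 (H × H) := (WithLp.equiv 2 (H × H)).symm ((r : ℂ) • x, (r : ℂ) • x)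
      with hzdef
    have hfst : z.fst = (r : ℂ) • x := rfl
    have hsnd : z.snd = (r : ℂ) • x := rfl
    have hz : ‖z‖ = 1 := by
      have hsq : ‖z‖ ^ 2 = ‖z.fst‖ ^ 2 + ‖z.snd‖ ^ 2 := WithLp.prod_norm_sq_eq_of_L2 z
      rw [hfst, hsnd, norm_smul] at hsq
      simp only [Complex.norm_real, Real.norm_eq_abs] at hsq
      have hr2' : r ^ 2 = 1/2 := by rw [sq]; exact hr2
      have h1 : ‖z‖ ^ 2 = 1 := by
        rw [hsq, abs_of_nonneg (by positivity : (0:ℝ) ≤ r), hx, mul_one, hr2']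
        norm_num
      rw [← Real.sqrt_sq (norm_nonneg z), h1, Real.sqrt_one]
    have hinner : (inner ℂ (blk 0 Y Y 0 z) z : ℂ) = inner ℂ (Y x) x := by
      rw [inner_blk, hfst, hsnd]
      simp only [map_smul, inner_smul_left, inner_smul_right, Complex.conj_ofReal]
      have : ((r:ℂ) * ((r:ℂ) * (inner ℂ (Y x) x : ℂ))) + ((r:ℂ) * ((r:ℂ) * (inner ℂ (Y x) x : ℂ)))
          = (((r*r)+(r*r) : ℝ) : ℂ) * inner ℂ (Y x) x := by push_cast; ring
      rw [this, hr2]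
      norm_num
    have key : ‖(inner ℂ (blk 0 Y Y 0 z) z : ℂ)‖ ≤ nr (blk 0 Y Y 0) :=
      le_ciSup (nr_bdd _ (blk 0 Y Y 0)) (⟨z, hz⟩ : {w : WithLp 2 (H × H) // ‖w‖ = 1})
    rwa [hinner] at key

theorem stmt6 (t : ℝ) (ht : t ∈ Set.Icc (0:ℝ) 1) (X : H →L[ℂ] H) :
    wnr t (blk 0 X X 0) = wnr t X := by
  unfold wnr
  rw [adjoint_blk, blk_lin, nr_blk]
end

section
/- For bounded linear operators X, Y on a complex Hilbert space H and t ∈ [0,1], the weighted numerical radius of the operator matrix [[X, Y], [Y, X]] equals max{w_t(X + Y), w_t(X - Y)}. -/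
open ContinuousLinearMap

variable {H : Type*} [NormedAddCommGroup H] [InnerProductSpace ℂ H] [CompleteSpace H]

section Aux

local notation "⟪" x ", " y "⟫" => @inner ℂ _ _ x y

lemma norm_eq_one_of_sq_eq_one {E : Type*} [NormedAddCommGroup E] (x : E)
    (h : ‖x‖ ^ 2 = 1) : ‖x‖ = 1 := by
  have := Real.sqrt_sq (norm_nonneg x)
  rw [h, Real.sqrt_one] at this
  exact this.symm

lemma nr_bddAbove (T : H →L[ℂ] H) :
    BddAbove (Set.range fun x : {x : H // ‖x‖ = 1} => ‖(inner ℂ (T x) (x : H) : ℂ)‖) := by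
  refine ⟨‖T‖, ?_⟩
  rintro r ⟨x, rfl⟩
  calc ‖(inner ℂ (T x) (x : H) : ℂ)‖ ≤ ‖T (x : H)‖ * ‖(x : H)‖ := norm_inner_le_norm _ _
    _ ≤ ‖T‖ * ‖(x : H)‖ * ‖(x : H)‖ := by gcongr; exact T.le_opNorm _
    _ = ‖T‖ := by rw [x.2]; ring

lemma nr_nonneg_s7 (T : H →L[ℂ] H) : 0 ≤ nr T :=
  Real.iSup_nonneg fun _ => norm_nonneg _

lemma le_nr (T : H →L[ℂ] H) {x : H} (hx : ‖x‖ = 1) :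
    ‖(inner ℂ (T x) x : ℂ)‖ ≤ nr T :=
  le_ciSup (nr_bddAbove T) (⟨x, hx⟩ : {x : H // ‖x‖ = 1})

lemma nr_le (T : H →L[ℂ] H) {M : ℝ} (hM : 0 ≤ M)
    (h : ∀ x : H, ‖x‖ = 1 → ‖(inner ℂ (T x) x : ℂ)‖ ≤ M) : nr T ≤ M :=
  Real.iSup_le (fun x => h x x.2) hM

lemma inner_abs_le_nr (T : H →L[ℂ] H) (x : H) :
    ‖(inner ℂ (T x) x : ℂ)‖ ≤ nr T * ‖x‖ ^ 2 := by
  rcases eq_or_ne x 0 with rfl | hx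
  · simp
  · have hn : (0:ℝ) < ‖x‖ := norm_pos_iff.2 hx
    set c : ℂ := ((‖x‖ : ℝ) : ℂ)⁻¹ with hc
    have hu : ‖c • x‖ = 1 := by
      rw [norm_smul, hc, norm_inv, Complex.norm_real, Real.norm_eq_abs,
        abs_of_nonneg (norm_nonneg x), inv_mul_cancel₀ hn.ne']
    have h1 := le_nr T hu
    have h2 : ‖(inner ℂ (T (c • x)) (c • x) : ℂ)‖
        = ‖x‖⁻¹ * ‖x‖⁻¹ * ‖(inner ℂ (T x) x : ℂ)‖ := by
      rw [map_smul, inner_smul_left, inner_smul_right, norm_mul, norm_mul,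
        RCLike.norm_conj, hc, norm_inv, Complex.norm_real, Real.norm_eq_abs,
        abs_of_nonneg (norm_nonneg x)]
      ring
    rw [h2] at h1
    have h3 := mul_le_mul_of_nonneg_right h1 (by positivity : (0:ℝ) ≤ ‖x‖ ^ 2)
    have e : ‖x‖⁻¹ * ‖x‖⁻¹ * ‖(inner ℂ (T x) x : ℂ)‖ * ‖x‖ ^ 2
        = ‖(inner ℂ (T x) x : ℂ)‖ := by
      have h4 : ‖x‖⁻¹ * ‖x‖ = 1 := inv_mul_cancel₀ hn.ne'
      calc ‖x‖⁻¹ * ‖x‖⁻¹ * ‖(inner ℂ (T x) x : ℂ)‖ * ‖x‖ ^ 2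
          = (‖x‖⁻¹ * ‖x‖) * (‖x‖⁻¹ * ‖x‖) * ‖(inner ℂ (T x) x : ℂ)‖ := by ring
        _ = ‖(inner ℂ (T x) x : ℂ)‖ := by rw [h4]; ring
    rw [e] at h3
    exact h3

@[simp] lemma blk_apply_fst (A B C D : H →L[ℂ] H) (x : WithLp 2 (H × H)) :
    (blk A B C D x).fst = A x.fst + B x.snd := rfl

@[simp] lemma blk_apply_snd (A B C D : H →L[ℂ] H) (x : WithLp 2 (H × H)) :
    (blk A B C D x).snd = C x.fst + D x.snd := rfl

lemma blk_adjoint (A B C D : H →L[ℂ] H) :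
    adjoint (blk A B C D) = blk (adjoint A) (adjoint C) (adjoint B) (adjoint D) := by
  symm
  rw [eq_adjoint_iff]
  intro x y
  simp only [WithLp.prod_inner_apply, WithLp.ofLp_fst, WithLp.ofLp_snd, blk_apply_fst, blk_apply_snd,
    inner_add_left, inner_add_right, adjoint_inner_left]
  ring

lemma blk_add_smul (r : ℝ) (A B C D A' B' C' D' : H →L[ℂ] H) :
    r • blk A B C D + blk A' B' C' D'
      = blk (r • A + A') (r • B + B') (r • C + C') (r • D + D') := by
  ext x
  apply (WithLp.equiv 2 (H × H)).injective
  apply Prod.ext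
  · simp only [WithLp.equiv_apply, WithLp.ofLp_fst, ContinuousLinearMap.add_apply,
      ContinuousLinearMap.smul_apply, WithLp.add_fst, WithLp.smul_fst,
      blk_apply_fst, smul_add]
    abel
  · simp only [WithLp.equiv_apply, WithLp.ofLp_snd, ContinuousLinearMap.add_apply,
      ContinuousLinearMap.smul_apply, WithLp.add_snd, WithLp.smul_snd,
      blk_apply_snd, smul_add]
    abel

lemma nr_blk_s7 (A B : H →L[ℂ] H) :
    nr (blk A B B A) = max (nr (A + B)) (nr (A - B)) := by
  have h2 : Real.sqrt 2 * Real.sqrt 2 = 2 := Real.mul_self_sqrt (by norm_num)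
  have h2pos : (0:ℝ) < Real.sqrt 2 := Real.sqrt_pos.2 (by norm_num)
  set c : ℂ := ((Real.sqrt 2 : ℝ) : ℂ)⁻¹ with hc
  have hcc : (starRingEnd ℂ) c = c := by
    simp [hc, map_inv₀, Complex.conj_ofReal]
  have hc2 : c * c * 2 = 1 := by
    have hr : ((Real.sqrt 2)⁻¹ * (Real.sqrt 2)⁻¹ * 2 : ℝ) = 1 := by
      rw [← mul_inv, h2]; norm_num
    rw [hc]
    exact_mod_cast hr
  have hcn : ‖c‖ = (Real.sqrt 2)⁻¹ := by
    rw [hc, norm_inv, Complex.norm_real, Real.norm_eq_abs, abs_of_nonneg h2pos.le]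
  have hrsq : ((Real.sqrt 2)⁻¹) ^ 2 = 2⁻¹ := by
    rw [sq, ← mul_inv, h2]
  apply le_antisymm
  · -- ≤
    apply nr_le _ ((nr_nonneg_s7 (A + B)).trans (le_max_left _ _))
    intro x hx
    set u := x.fst with hu
    set v := x.snd with hv
    set p : H := c • (u + v) with hp
    set q : H := c • (u - v) with hq
    have hid : (inner ℂ ((blk A B B A) x) x : ℂ)
        = inner ℂ ((A + B) p) p + inner ℂ ((A - B) q) q := by
      simp only [WithLp.prod_inner_apply, WithLp.ofLp_fst, WithLp.ofLp_snd]
      rw [blk_apply_fst, blk_apply_snd]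
      simp only [hp, hq, add_apply, sub_apply, map_smul, map_add, map_sub,
        inner_add_left, inner_add_right, inner_sub_left, inner_sub_right,
        inner_smul_left, inner_smul_right, hcc, ← hu, ← hv]
      linear_combination (-(⟪A u, u⟫ : ℂ) - ⟪A v, v⟫ - ⟪B u, v⟫ - ⟪B v, u⟫) * hc2
    have hx2 : ‖u‖ ^ 2 + ‖v‖ ^ 2 = 1 := by
      rw [← WithLp.prod_norm_sq_eq_of_L2, hx, one_pow]
    have hpq : ‖p‖ ^ 2 + ‖q‖ ^ 2 = 1 := by
      have hpar := parallelogram_law_with_norm ℂ u v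
      have e1 : ‖p‖ ^ 2 + ‖q‖ ^ 2
          = ((Real.sqrt 2)⁻¹) ^ 2 * (‖u + v‖ * ‖u + v‖ + ‖u - v‖ * ‖u - v‖) := by
        rw [hp, hq, norm_smul, norm_smul, hcn]; ring
      have e2 : ‖u‖ * ‖u‖ + ‖v‖ * ‖v‖ = 1 := by rw [← hx2]; ring
      rw [e1, hrsq]; linear_combination (2⁻¹:ℝ) * hpar + hx2
    rw [hid]
    calc ‖(inner ℂ ((A + B) p) p : ℂ) + inner ℂ ((A - B) q) q‖
        ≤ ‖(inner ℂ ((A + B) p) p : ℂ)‖ + ‖(inner ℂ ((A - B) q) q : ℂ)‖ := norm_add_le _ _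
      _ ≤ nr (A + B) * ‖p‖ ^ 2 + nr (A - B) * ‖q‖ ^ 2 :=
          add_le_add (inner_abs_le_nr _ _) (inner_abs_le_nr _ _)
      _ ≤ max (nr (A + B)) (nr (A - B)) * ‖p‖ ^ 2
            + max (nr (A + B)) (nr (A - B)) * ‖q‖ ^ 2 := by
          gcongr
          · exact le_max_left _ _
          · exact le_max_right _ _
      _ = max (nr (A + B)) (nr (A - B)) := by rw [← mul_add, hpq, mul_one]
  · -- ≥
    apply max_le
    · apply nr_le _ (nr_nonneg_s7 _)
      intro z hz
      set x : WithLp 2 (H × H) := (WithLp.equiv 2 (H × H)).symm (c • z, c • z) with hxdef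
      have hxf : x.fst = c • z := rfl
      have hxs : x.snd = c • z := rfl
      have hxn : ‖x‖ = 1 := by
        have hsq : ‖x‖ ^ 2 = 1 := by
          rw [WithLp.prod_norm_sq_eq_of_L2, hxf, hxs, norm_smul, hcn, hz,
            mul_one, ← two_mul, hrsq]
          norm_num
        exact norm_eq_one_of_sq_eq_one x hsq
      have hinner : (inner ℂ ((blk A B B A) x) x : ℂ) = inner ℂ ((A + B) z) z := by
        simp only [WithLp.prod_inner_apply, WithLp.ofLp_fst, WithLp.ofLp_snd]
        rw [blk_apply_fst, blk_apply_snd, hxf, hxs]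
        simp only [add_apply, map_smul, inner_add_left, inner_smul_left,
          inner_smul_right, hcc]
        linear_combination ((⟪A z, z⟫ : ℂ) + ⟪B z, z⟫) * hc2
      have := le_nr (blk A B B A) hxn
      rwa [hinner] at this
    · apply nr_le _ (nr_nonneg_s7 _)
      intro z hz
      set x : WithLp 2 (H × H) := (WithLp.equiv 2 (H × H)).symm (c • z, -(c • z)) with hxdef
      have hxf : x.fst = c • z := rfl
      have hxs : x.snd = -(c • z) := rfl
      have hxn : ‖x‖ = 1 := by
        have hsq : ‖x‖ ^ 2 = 1 := by
          rw [WithLp.prod_norm_sq_eq_of_L2, hxf, hxs, norm_neg, norm_smul, hcn, hz,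
            mul_one, ← two_mul, hrsq]
          norm_num
        exact norm_eq_one_of_sq_eq_one x hsq
      have hinner : (inner ℂ ((blk A B B A) x) x : ℂ) = inner ℂ ((A - B) z) z := by
        simp only [WithLp.prod_inner_apply, WithLp.ofLp_fst, WithLp.ofLp_snd]
        rw [blk_apply_fst, blk_apply_snd, hxf, hxs]
        simp only [sub_apply, add_apply, map_smul, map_neg, inner_add_left,
          inner_sub_left, inner_neg_left, inner_neg_right,
          inner_smul_left, inner_smul_right, hcc]
        linear_combination ((⟪A z, z⟫ : ℂ) - ⟪B z, z⟫) * hc2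
      have := le_nr (blk A B B A) hxn
      rwa [hinner] at this

end Aux

set_option synthInstance.maxHeartbeats 1000000 in
theorem stmt7 (t : ℝ) (ht : t ∈ Set.Icc (0:ℝ) 1) (X Y : H →L[ℂ] H) :
    wnr t (blk X Y Y X) = max (wnr t (X + Y)) (wnr t (X - Y)) := by
  have h1 : (1 - 2*t) • adjoint (blk X Y Y X) + blk X Y Y X
      = blk ((1 - 2*t) • adjoint X + X) ((1 - 2*t) • adjoint Y + Y)
          ((1 - 2*t) • adjoint Y + Y) ((1 - 2*t) • adjoint X + X) := by
    rw [blk_adjoint, blk_add_smul]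
  have e1 : ((1 - 2*t) • adjoint X + X) + ((1 - 2*t) • adjoint Y + Y)
      = (1 - 2*t) • adjoint (X + Y) + (X + Y) := by
    rw [map_add, smul_add]; abel
  have e2 : ((1 - 2*t) • adjoint X + X) - ((1 - 2*t) • adjoint Y + Y)
      = (1 - 2*t) • adjoint (X - Y) + (X - Y) := by
    rw [map_sub, smul_sub]; abel
  unfold wnr
  rw [h1, nr_blk_s7, e1, e2]
end

section
/- For vectors x, y, e in a complex Hilbert space H with ‖e‖ = 1 and α ∈ [0,1], |⟨x,e⟩⟨e,y⟩|^2 ≤ (1/4)·[(1+α)·‖x‖^2‖y‖^2 + (3-α)·‖x‖‖y‖·|⟨x,y⟩|]. -/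
theorem buzano_aux {H : Type*} [NormedAddCommGroup H] [InnerProductSpace ℂ H]
    (x y e : H) (he : ‖e‖ = 1) :
    2 * ‖(inner ℂ x e : ℂ) * (inner ℂ e y : ℂ)‖ ≤ ‖x‖ * ‖y‖ + ‖(inner ℂ x y : ℂ)‖ := by
  set z : H := (2 * (inner ℂ e y : ℂ)) • e - y with hz
  have hiz : (inner ℂ x z : ℂ) = 2 * (inner ℂ x e) * (inner ℂ e y) - inner ℂ x y := by
    simp [hz, inner_sub_right, inner_smul_right]; ring
  have hnz : ‖z‖ = ‖y‖ := by
    have hsq : ‖z‖ ^ 2 = ‖y‖ ^ 2 := by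
      rw [hz, @norm_sub_sq ℂ, norm_smul, inner_smul_left]
      have h1 : (inner ℂ e e : ℂ) = 1 := by
        rw [inner_self_eq_norm_sq_to_K, he]; norm_num
      simp [norm_mul, he, h1]
      rw [show (inner ℂ y e : ℂ) = starRingEnd ℂ (inner ℂ e y) from (inner_conj_symm y e).symm]
      simp only [Complex.conj_re, Complex.conj_im]
      have h2 := Complex.sq_norm ((inner ℂ e y : ℂ))
      rw [Complex.normSq_apply] at h2
      nlinarith [h2]
    nlinarith [norm_nonneg z, norm_nonneg y]
  have h := norm_inner_le_norm (𝕜 := ℂ) x z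
  rw [hiz, hnz] at h
  have htr := norm_sub_norm_le (2 * (inner ℂ x e : ℂ) * (inner ℂ e y : ℂ)) (inner ℂ x y)
  have heq : ‖2 * (inner ℂ x e : ℂ) * (inner ℂ e y : ℂ)‖
      = 2 * ‖(inner ℂ x e : ℂ) * (inner ℂ e y : ℂ)‖ := by
    rw [mul_assoc, norm_mul]; simp
  linarith

theorem stmt17 {H : Type*} [NormedAddCommGroup H] [InnerProductSpace ℂ H]
    (x y e : H) (he : ‖e‖ = 1) (α : ℝ) (hα : α ∈ Set.Icc (0:ℝ) 1) :
    ‖(inner ℂ x e : ℂ) * (inner ℂ e y : ℂ)‖ ^ 2 ≤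
      (1/4) * ((1 + α) * ‖x‖^2 * ‖y‖^2
        + (3 - α) * ‖x‖ * ‖y‖ * ‖(inner ℂ x y : ℂ)‖) := by
  obtain ⟨h0, h1⟩ := hα
  have hb := buzano_aux x y e he
  have hcs := norm_inner_le_norm (𝕜 := ℂ) x y
  have hBnn : (0:ℝ) ≤ ‖(inner ℂ x e : ℂ) * (inner ℂ e y : ℂ)‖ := norm_nonneg _
  have hbnn : (0:ℝ) ≤ ‖(inner ℂ x y : ℂ)‖ := norm_nonneg _
  nlinarith [sq_nonneg (‖x‖ * ‖y‖ - ‖(inner ℂ x y : ℂ)‖),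
    mul_nonneg hbnn (sub_nonneg.2 hcs),
    mul_nonneg h0 (mul_nonneg (sub_nonneg.2 hcs) (add_nonneg (mul_nonneg (norm_nonneg x) (norm_nonneg y)) hbnn)),
    mul_nonneg hBnn hbnn]
end

section
/- For vectors x, y, e in a complex Hilbert space H with ‖e‖ = 1 and α ∈ [0,1], |⟨x,e⟩⟨e,y⟩|^2 ≤ (α/4)·(‖x‖^2‖y‖^2 + 2‖x‖‖y‖|⟨x,y⟩| + |⟨x,y⟩|^2) + ((1-α)/2)·(‖x‖‖y‖ + |⟨x,y⟩|)·|⟨x,e⟩⟨e,y⟩|. -/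
theorem stmt18 {H : Type*} [NormedAddCommGroup H] [InnerProductSpace ℂ H]
    (x y e : H) (he : ‖e‖ = 1) (α : ℝ) (hα : α ∈ Set.Icc (0:ℝ) 1) :
    ‖(inner ℂ x e : ℂ) * (inner ℂ e y : ℂ)‖ ^ 2 ≤
      (α/4) * (‖x‖^2 * ‖y‖^2 + 2 * ‖x‖ * ‖y‖ * ‖(inner ℂ x y : ℂ)‖
          + ‖(inner ℂ x y : ℂ)‖^2)
      + ((1 - α)/2) * (‖x‖ * ‖y‖ + ‖(inner ℂ x y : ℂ)‖)
          * ‖(inner ℂ x e : ℂ) * (inner ℂ e y : ℂ)‖ := by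
  obtain ⟨hα0, hα1⟩ := hα
  set c : ℂ := inner ℂ e x with hc
  set P : H := c • e with hP
  have hPy : (inner ℂ x e : ℂ) * inner ℂ e y = inner ℂ P y := by
    rw [hP, inner_smul_left, hc, ← inner_conj_symm x e]
  have hnorm : ‖(2:ℂ) • P - x‖ = ‖x‖ := by
    have h1 : ‖(2:ℂ) • P - x‖ ^ 2 = ‖x‖ ^ 2 := by
      rw [@norm_sub_sq ℂ]
      have hre : RCLike.re (inner ℂ ((2:ℂ) • P) x : ℂ) = 2 * Complex.normSq c := by
        rw [hP, smul_smul, inner_smul_left, ← hc]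
        simp [Complex.normSq_apply, Complex.mul_re, Complex.conj_re, Complex.conj_im]
        ring
      have hnP : ‖(2:ℂ) • P‖ ^ 2 = 4 * Complex.normSq c := by
        rw [hP, smul_smul, norm_smul, he, mul_one, norm_mul]
        simp [← Complex.sq_norm]
        ring
      rw [hre, hnP]; ring
    nlinarith [norm_nonneg ((2:ℂ) • P - x), norm_nonneg x]
  have hbuz : ‖(inner ℂ x e : ℂ) * inner ℂ e y‖ ≤ (‖x‖ * ‖y‖ + ‖(inner ℂ x y : ℂ)‖) / 2 := by
    have h2 : (inner ℂ x e : ℂ) * inner ℂ e y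
        = (inner ℂ ((2:ℂ) • P - x) y + inner ℂ x y) / 2 := by
      rw [hPy, hP]
      simp [inner_sub_left, inner_smul_left, map_ofNat]
    calc ‖(inner ℂ x e : ℂ) * inner ℂ e y‖
        = ‖(inner ℂ ((2:ℂ) • P - x) y : ℂ) + inner ℂ x y‖ / 2 := by
          rw [h2, norm_div]; norm_num
      _ ≤ (‖(inner ℂ ((2:ℂ) • P - x) y : ℂ)‖ + ‖(inner ℂ x y : ℂ)‖) / 2 := by
          gcongr; exact norm_add_le _ _
      _ ≤ (‖x‖ * ‖y‖ + ‖(inner ℂ x y : ℂ)‖) / 2 := by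
          gcongr
          calc ‖(inner ℂ ((2:ℂ) • P - x) y : ℂ)‖ ≤ ‖(2:ℂ) • P - x‖ * ‖y‖ :=
                norm_inner_le_norm _ _
            _ = ‖x‖ * ‖y‖ := by rw [hnorm]
  set t := ‖(inner ℂ x e : ℂ) * inner ℂ e y‖
  have ht : 0 ≤ t := norm_nonneg _
  nlinarith [hbuz, ht, mul_nonneg hα0 (sub_nonneg.mpr hbuz)]
end
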